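/- As n → ∞, Σ_{m=1}^{n-1} (1/m)·log(1 - m/n) = -π²/6 + O((log n)/n). -/

import Mathlib

open Filter Asymptotics Real Finset

private lemma step_ineq (k m : ℕ) :
    ((k:ℝ)+1) * (m:ℝ)^k ≤ ((m:ℝ)+1)^(k+1) - (m:ℝ)^(k+1) ∧
    ((m:ℝ)+1)^(k+1) - (m:ℝ)^(k+1) ≤ ((k:ℝ)+1) * ((m:ℝ)+1)^k := by
  have h := geom_sum₂_mul ((m:ℝ)+1) (m:ℝ) (k+1)
  simp only [add_sub_cancel_left, mul_one, Nat.add_sub_cancel] at h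
  rw [← h]
  have h0 : (0:ℝ) ≤ m := Nat.cast_nonneg m
  have h1 : (m:ℝ) ≤ (m:ℝ)+1 := by linarith
  constructor
  · have : ((k:ℝ)+1) * (m:ℝ)^k = ∑ i ∈ range (k+1), (m:ℝ)^k := by
      rw [Finset.sum_const, card_range]; push_cast; ring
    rw [this]
    refine Finset.sum_le_sum fun i hi => ?_
    have hik : i ≤ k := Nat.lt_succ_iff.mp (Finset.mem_range.mp hi)
    calc (m:ℝ)^k = (m:ℝ)^i * (m:ℝ)^(k-i) := by
          rw [← pow_add, Nat.add_sub_cancel' hik]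
      _ ≤ ((m:ℝ)+1)^i * (m:ℝ)^(k-i) := by gcongr
  · have : ((k:ℝ)+1) * ((m:ℝ)+1)^k = ∑ i ∈ range (k+1), ((m:ℝ)+1)^k := by
      rw [Finset.sum_const, card_range]; push_cast; ring
    rw [this]
    refine Finset.sum_le_sum fun i hi => ?_
    have hik : i ≤ k := Nat.lt_succ_iff.mp (Finset.mem_range.mp hi)
    calc ((m:ℝ)+1)^i * (m:ℝ)^(k-i) ≤ ((m:ℝ)+1)^i * ((m:ℝ)+1)^(k-i) := by gcongr
      _ = ((m:ℝ)+1)^k := by rw [← pow_add, Nat.add_sub_cancel' hik]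

private lemma telescope_pow (n k : ℕ) :
    ∑ m ∈ range n, (((m:ℝ)+1)^(k+1) - (m:ℝ)^(k+1)) = (n:ℝ)^(k+1) := by
  have := Finset.sum_range_sub (fun m : ℕ => (m:ℝ)^(k+1)) n
  simp only [Nat.cast_add, Nat.cast_one] at this
  rw [this]
  simp

private lemma T_le (n k : ℕ) :
    ((k:ℝ)+1) * (∑ m ∈ Finset.Ioo 0 n, (m:ℝ)^k) ≤ (n:ℝ)^(k+1) := by
  calc ((k:ℝ)+1) * (∑ m ∈ Finset.Ioo 0 n, (m:ℝ)^k)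
      = ∑ m ∈ Finset.Ioo 0 n, ((k:ℝ)+1) * (m:ℝ)^k := by rw [Finset.mul_sum]
    _ ≤ ∑ m ∈ range n, ((k:ℝ)+1) * (m:ℝ)^k := by
        refine Finset.sum_le_sum_of_subset_of_nonneg ?_ fun i _ _ => by positivity
        intro x hx; simp only [Finset.mem_Ioo] at hx; exact Finset.mem_range.mpr hx.2
    _ ≤ ∑ m ∈ range n, (((m:ℝ)+1)^(k+1) - (m:ℝ)^(k+1)) :=
        Finset.sum_le_sum fun m _ => (step_ineq k m).1
    _ = (n:ℝ)^(k+1) := telescope_pow n k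

private lemma le_T (n k : ℕ) (hn : 1 ≤ n) :
    (n:ℝ)^(k+1) ≤ ((k:ℝ)+1) * ((∑ m ∈ Finset.Ioo 0 n, (m:ℝ)^k) + (n:ℝ)^k) := by
  have h1 : ∑ m ∈ range n, ((m:ℝ)+1)^k = (∑ m ∈ Finset.Ioo 0 n, (m:ℝ)^k) + (n:ℝ)^k := by
    have h2 : ∑ m ∈ Finset.Ico 1 (n+1), (m:ℝ)^k = ∑ m ∈ range n, ((m:ℝ)+1)^k := by
      rw [Finset.sum_Ico_eq_sum_range]
      simp only [Nat.add_sub_cancel]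
      refine Finset.sum_congr rfl fun i _ => ?_
      push_cast; ring_nf
    rw [← h2, Finset.sum_Ico_succ_top hn, ← Finset.Ico_add_one_left_eq_Ioo, zero_add]
  rw [← h1, Finset.mul_sum]
  calc (n:ℝ)^(k+1) = ∑ m ∈ range n, (((m:ℝ)+1)^(k+1) - (m:ℝ)^(k+1)) := (telescope_pow n k).symm
    _ ≤ ∑ m ∈ range n, ((k:ℝ)+1) * ((m:ℝ)+1)^k := Finset.sum_le_sum fun m _ => (step_ineq k m).2

private lemma basel' : HasSum (fun k : ℕ => 1/((k:ℝ)+1)^2) (π^2/6) := by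
  have h := (hasSum_nat_add_iff (f := fun n : ℕ => 1/(n:ℝ)^2) 1).mpr
    (by simpa using hasSum_zeta_two)
  simpa using h

private lemma hasSum_main (n : ℕ) (hn : 2 ≤ n) :
    HasSum (fun k : ℕ => (∑ m ∈ Finset.Ioo 0 n, (m:ℝ)^k) / (((k:ℝ)+1) * (n:ℝ)^(k+1)))
      (-(∑ m ∈ Finset.Ioo 0 n, (1:ℝ)/m * Real.log (1 - m/n))) := by
  have hN : (0:ℝ) < n := by positivity
  have h1 : ∀ m ∈ Finset.Ioo 0 n, HasSum
      (fun k : ℕ => (1:ℝ)/m * (((m:ℝ)/n) ^ (k+1) / ((k:ℝ)+1)))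
      ((1:ℝ)/m * (-Real.log (1 - (m:ℝ)/n))) := by
    intro m hm
    simp only [Finset.mem_Ioo] at hm
    have hx : |(m:ℝ)/n| < 1 := by
      rw [abs_of_nonneg (by positivity), div_lt_one hN]
      exact_mod_cast hm.2
    exact (hasSum_pow_div_log_of_abs_lt_one hx).mul_left _
  have h2 := hasSum_sum h1
  have h3 : (∑ m ∈ Finset.Ioo 0 n, (1:ℝ)/m * (-Real.log (1 - (m:ℝ)/n)))
      = -(∑ m ∈ Finset.Ioo 0 n, (1:ℝ)/m * Real.log (1 - m/n)) := by
    rw [← Finset.sum_neg_distrib]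
    exact Finset.sum_congr rfl fun m _ => by ring
  rw [h3] at h2
  convert h2 using 2 with k
  rw [Finset.sum_div]
  refine Finset.sum_congr rfl fun m hm => ?_
  simp only [Finset.mem_Ioo] at hm
  have hm0 : (0:ℝ) < m := by exact_mod_cast hm.1
  have hk : (0:ℝ) < (k:ℝ)+1 := by positivity
  rw [div_pow, pow_succ (m:ℝ)]
  field_simp

private lemma main_bound (n : ℕ) (hn : 2 ≤ n) :
    0 ≤ (∑ m ∈ Finset.Ioo 0 n, (1:ℝ)/m * Real.log (1 - m/n)) + π^2/6 ∧
    (∑ m ∈ Finset.Ioo 0 n, (1:ℝ)/m * Real.log (1 - m/n)) + π^2/6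
      ≤ (2 + Real.log n) / n := by
  set S := ∑ m ∈ Finset.Ioo 0 n, (1:ℝ)/m * Real.log (1 - m/n) with hS
  set T : ℕ → ℝ := fun k => ∑ m ∈ Finset.Ioo 0 n, (m:ℝ)^k with hT
  set u : ℕ → ℝ := fun k => 1/((k:ℝ)+1)^2 - T k / (((k:ℝ)+1) * (n:ℝ)^(k+1)) with hu
  have hN : (0:ℝ) < n := by positivity
  have hn1 : 1 ≤ n := by omega
  have hU : HasSum u (S + π^2/6) := by
    have h := basel'.sub (hasSum_main n hn)
    have he : π^2/6 - -S = S + π^2/6 := by ring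
    rw [he] at h
    exact h
  have hT0 : ∀ k, 0 ≤ T k := fun k => Finset.sum_nonneg fun m _ => by positivity
  have hu_eq : ∀ k, u k = ((n:ℝ)^(k+1) - ((k:ℝ)+1) * T k) / (((k:ℝ)+1)^2 * (n:ℝ)^(k+1)) := by
    intro k
    have hk : ((k:ℝ)+1) ≠ 0 := by positivity
    have hNk : ((n:ℝ))^(k+1) ≠ 0 := by positivity
    simp only [u]
    field_simp
  have hu0 : ∀ k, 0 ≤ u k := by
    intro k
    rw [hu_eq k]
    apply div_nonneg (sub_nonneg.mpr (T_le n k)) (by positivity)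
  have hu1 : ∀ k, u k ≤ 1/((k:ℝ)+1)^2 := by
    intro k
    simp only [u]
    have : 0 ≤ T k / (((k:ℝ)+1) * (n:ℝ)^(k+1)) := div_nonneg (hT0 k) (by positivity)
    linarith
  have hu2 : ∀ k, u k ≤ 1/(((k:ℝ)+1) * n) := by
    intro k
    rw [hu_eq k]
    have hnum : (n:ℝ)^(k+1) - ((k:ℝ)+1) * T k ≤ ((k:ℝ)+1) * (n:ℝ)^k := by
      have := le_T n k hn1
      nlinarith [hT0 k]
    calc ((n:ℝ)^(k+1) - ((k:ℝ)+1) * T k) / (((k:ℝ)+1)^2 * (n:ℝ)^(k+1))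
        ≤ (((k:ℝ)+1) * (n:ℝ)^k) / (((k:ℝ)+1)^2 * (n:ℝ)^(k+1)) := by
          apply div_le_div_of_nonneg_right hnum (by positivity) |>.trans_eq rfl
      _ = 1/(((k:ℝ)+1) * n) := by
          rw [pow_succ (n:ℝ)]
          have hk : ((k:ℝ)+1) ≠ 0 := by positivity
          have h1 : (n:ℝ) ≠ 0 := ne_of_gt hN
          have h2 : (n:ℝ)^k ≠ 0 := by positivity
          field_simp
  -- split tsum at n
  have hsplit := Summable.sum_add_tsum_nat_add (f := u) n hU.summable
  rw [hU.tsum_eq] at hsplit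
  constructor
  · have : 0 ≤ ∑' k, u k := tsum_nonneg hu0
    rwa [hU.tsum_eq] at this
  · rw [← hsplit]
    have hhead : ∑ k ∈ range n, u k ≤ (1 + Real.log n) / n := by
      calc ∑ k ∈ range n, u k ≤ ∑ k ∈ range n, 1/(((k:ℝ)+1) * n) :=
            Finset.sum_le_sum fun k _ => hu2 k
        _ = (∑ k ∈ range n, ((k:ℝ)+1)⁻¹) / n := by
            rw [Finset.sum_div]
            exact Finset.sum_congr rfl fun k _ => by
              rw [one_div, mul_inv, inv_eq_one_div ((k:ℝ)+1)]
              ring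
        _ = (harmonic n : ℝ) / n := by
            congr 1
            rw [harmonic]
            push_cast
            rfl
        _ ≤ (1 + Real.log n) / n := by
            gcongr
            exact harmonic_le_one_add_log n
    have htail : ∑' k, u (k + n) ≤ 1 / (n:ℝ) := by
      have hsumm : Summable fun k => u (k + n) := (summable_nat_add_iff n).mpr hU.summable
      refine Summable.tsum_le_of_sum_le hsumm fun s => ?_
      obtain ⟨M, hM⟩ := s.exists_nat_subset_range
      have h1 : ∑ j ∈ s, u (j + n) ≤ ∑ j ∈ range M, u (j + n) :=
        Finset.sum_le_sum_of_subset_of_nonneg hM fun i _ _ => hu0 _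
      have h2 : ∀ j : ℕ, u (j + n) ≤ 1/((n:ℝ)+j) - 1/((n:ℝ)+j+1) := by
        intro j
        have hx : (0:ℝ) < (n:ℝ) + j := by positivity
        have heq : 1/((n:ℝ)+j) - 1/((n:ℝ)+j+1) = 1/(((n:ℝ)+j) * ((n:ℝ)+j+1)) := by
          field_simp
          ring
        rw [heq]
        refine (hu1 (j+n)).trans ?_
        have hcast : ((j+n : ℕ):ℝ) + 1 = (n:ℝ)+j+1 := by push_cast; ring
        rw [hcast]
        apply one_div_le_one_div_of_le (by positivity)
        nlinarith
      have h3 : ∑ j ∈ range M, u (j + n) ≤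
          ∑ j ∈ range M, (1/((n:ℝ)+j) - 1/((n:ℝ)+j+1)) :=
        Finset.sum_le_sum fun j _ => h2 j
      have h4 : ∑ j ∈ range M, (1/((n:ℝ)+j) - 1/((n:ℝ)+j+1)) = 1/(n:ℝ) - 1/((n:ℝ)+M) := by
        have := Finset.sum_range_sub' (fun j : ℕ => 1/((n:ℝ)+j)) M
        simp only [Nat.cast_add, Nat.cast_one, Nat.cast_zero, add_zero] at this
        rw [← this]
        exact Finset.sum_congr rfl fun j _ => by push_cast; ring_nf
      have h5 : (0:ℝ) ≤ 1/((n:ℝ)+M) := by positivity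
      linarith
    have : (1 + Real.log n)/n + 1/(n:ℝ) = (2 + Real.log n)/n := by ring
    linarith

theorem sum_log_one_sub_div :
    (fun n : ℕ => (∑ m ∈ Finset.Ioo 0 n, (1 : ℝ) / m * Real.log (1 - m / n)) -
      (-(Real.pi ^ 2 / 6)))
      =O[atTop] (fun n : ℕ => Real.log n / n) := by
  rw [isBigO_iff]
  refine ⟨3, eventually_atTop.mpr ⟨3, fun n hn => ?_⟩⟩
  have hn2 : 2 ≤ n := by omega
  have hN : (0:ℝ) < n := by positivity
  have hlog : 1 ≤ Real.log n := by
    rw [Real.le_log_iff_exp_le hN]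
    calc Real.exp 1 ≤ 3 := by
          have := Real.exp_one_lt_d9
          linarith
      _ ≤ (n:ℝ) := by exact_mod_cast hn
  obtain ⟨h0, h1⟩ := main_bound n hn2
  have heq : (∑ m ∈ Finset.Ioo 0 n, (1 : ℝ) / m * Real.log (1 - m / n)) - (-(π^2/6))
      = (∑ m ∈ Finset.Ioo 0 n, (1 : ℝ) / m * Real.log (1 - m / n)) + π^2/6 := by ring
  rw [Real.norm_eq_abs, Real.norm_eq_abs, heq, abs_of_nonneg h0,
    abs_of_nonneg (by positivity : (0:ℝ) ≤ Real.log n / n)]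
  calc (∑ m ∈ Finset.Ioo 0 n, (1 : ℝ) / m * Real.log (1 - m / n)) + π^2/6
      ≤ (2 + Real.log n) / n := h1
    _ ≤ 3 * (Real.log n / n) := by
        rw [div_le_iff₀ hN]
        have : 3 * (Real.log n / n) * n = 3 * Real.log n := by field_simp
        rw [this]
        linarith
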